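/- Every graph automorphism φ of the triangular grid graph G_T is an affine map: there exist an orthogonal linear map A of ℝ² with A(L) = L and a vector b ∈ L such that φ(x) = A·x + b for all x ∈ L. In particular every automorphism of G_T extends to an isometry of the Euclidean plane, namely a translation, a rotation by a multiple of 60°, a reflection, or a glide reflection. -/

import Mathlib

set_option maxRecDepth 20000
set_option linter.unnecessarySeqFocus false


/-- The triangular lattice `L = {a·(1,0) + b·(1/2,√3/2) : a, b ∈ ℤ} ⊆ ℝ²`. -/
def triLat : Set (ℝ × ℝ) :=
  {x | ∃ a b : ℤ, x = (a : ℝ) • ((1 : ℝ), (0 : ℝ)) + (b : ℝ) • ((1/2 : ℝ), Real.sqrt 3 / 2)}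

/-- The triangular grid graph `G_T`: vertex set the triangular lattice, with two
vertices adjacent iff their Euclidean distance is 1. -/
def GT : SimpleGraph triLat where
  Adj x y := ((x : ℝ × ℝ).1 - (y : ℝ × ℝ).1) ^ 2 + ((x : ℝ × ℝ).2 - (y : ℝ × ℝ).2) ^ 2 = 1
  symm := by
    constructor
    intro x y h
    rw [← h]; ring
  loopless := by
    constructor
    intro x h
    simp at h



def sv : Fin 6 → ℤ × ℤ := ![(1,0),(0,1),(-1,1),(-1,0),(0,-1),(1,-1)]
def Sl : List (ℤ × ℤ) := [(1,0),(0,1),(-1,1),(-1,0),(0,-1),(1,-1)]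
def mapp (M : (ℤ×ℤ)×(ℤ×ℤ)) (u : ℤ × ℤ) : ℤ × ℤ :=
  (M.1.1*u.1 + M.1.2*u.2, M.2.1*u.1 + M.2.2*u.2)
def T : Fin 12 → (ℤ×ℤ)×(ℤ×ℤ) :=
  ![((1,0),(0,1)), ((0,-1),(1,1)), ((-1,-1),(1,0)), ((-1,0),(0,-1)), ((0,1),(-1,-1)), ((1,1),(-1,0)),
    ((1,1),(0,-1)), ((0,1),(1,0)), ((-1,0),(1,1)), ((-1,-1),(0,1)), ((0,-1),(-1,0)), ((1,0),(-1,-1))]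

theorem L1 : ∀ g0 g1 : Fin 6, sv g0 - sv g1 ∈ Sl →
    ∃ k : Fin 12, mapp (T k) (sv 0) = sv g0 ∧ mapp (T k) (sv 1) = sv g1 := by decide

theorem L2 : ∀ x ∈ Sl, ∀ y ∈ Sl, x - y ∈ Sl →
    ∀ z ∈ Sl, ∀ z' ∈ Sl, z - y ∈ Sl → z' - y ∈ Sl → z ≠ x → z' ≠ x → z = z' := by decide

theorem Lmat : ∀ k k' : Fin 12, ∀ i : Fin 6,
    mapp (T k) (sv i) = mapp (T k') (sv i) →
    mapp (T k) (sv (i+1)) = mapp (T k') (sv (i+1)) → T k = T k' := by decide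

theorem svSl : ∀ i : Fin 6, sv i ∈ Sl := by decide
theorem sv01 : sv 0 - sv 1 ∈ Sl := by decide
theorem svstep : ∀ i : Fin 6, sv i - sv (i+1) ∈ Sl := by decide
theorem svstep2 : ∀ i : Fin 6, sv (i+2) - sv (i+1) ∈ Sl := by decide
theorem svne : ∀ i : Fin 6, sv (i+2) ≠ sv i := by decide
theorem svneg : ∀ i : Fin 6, sv (i+3) = -sv i := by decide
theorem svdiff : ∀ i : Fin 6, sv (i+1) - sv i = sv (i+2) := by decide
theorem LTmem : ∀ (k : Fin 12) (i : Fin 6), mapp (T k) (sv i) ∈ Sl := by decide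
theorem LTadj : ∀ (k : Fin 12) (i j : Fin 6), sv i - sv j ∈ Sl →
    mapp (T k) (sv i) - mapp (T k) (sv j) ∈ Sl := by decide
theorem LTne : ∀ (k : Fin 12) (i j : Fin 6), sv i ≠ sv j →
    mapp (T k) (sv i) ≠ mapp (T k) (sv j) := by decide
theorem Lq : ∀ k : Fin 12,
    (T k).1.1^2 + (T k).1.1*(T k).2.1 + (T k).2.1^2 = 1 ∧
    (T k).1.2^2 + (T k).1.2*(T k).2.2 + (T k).2.2^2 = 1 ∧
    2*(T k).1.1*(T k).1.2 + (T k).1.1*(T k).2.2 + (T k).2.1*(T k).1.2 + 2*(T k).2.1*(T k).2.2 = 1 := by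
  decide

def mmul (M N : (ℤ×ℤ)×(ℤ×ℤ)) : (ℤ×ℤ)×(ℤ×ℤ) :=
  ((M.1.1*N.1.1 + M.1.2*N.2.1, M.1.1*N.1.2 + M.1.2*N.2.2),
   (M.2.1*N.1.1 + M.2.2*N.2.1, M.2.1*N.1.2 + M.2.2*N.2.2))

theorem Linv : ∀ k : Fin 12, ∃ k' : Fin 12,
    mmul (T k) (T k') = ((1,0),(0,1)) ∧ mmul (T k') (T k) = ((1,0),(0,1)) := by decide

theorem svidx : ∀ u ∈ Sl, ∃ i : Fin 6, sv i = u := by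
  intro u hu
  fin_cases hu
  exacts [⟨0, rfl⟩, ⟨1, rfl⟩, ⟨2, rfl⟩, ⟨3, rfl⟩, ⟨4, rfl⟩, ⟨5, rfl⟩]

theorem mapp_mmul (M N : (ℤ×ℤ)×(ℤ×ℤ)) (u : ℤ×ℤ) :
    mapp (mmul M N) u = mapp M (mapp N u) := by
  simp only [mapp, mmul, Prod.mk.injEq]; constructor <;> ring

theorem mapp_id (u : ℤ×ℤ) : mapp ((1,0),(0,1)) u = u := by
  rw [Prod.ext_iff]; constructor <;> simp [mapp]

theorem mapp_sub (M : (ℤ×ℤ)×(ℤ×ℤ)) (u v : ℤ×ℤ) :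
    mapp M (u - v) = mapp M u - mapp M v := by
  rw [Prod.ext_iff]; constructor <;> simp [mapp] <;> ring

theorem mapp_neg (M : (ℤ×ℤ)×(ℤ×ℤ)) (u : ℤ×ℤ) : mapp M (-u) = - mapp M u := by
  rw [Prod.ext_iff]; constructor <;> simp [mapp] <;> ring

theorem mapp_add (M : (ℤ×ℤ)×(ℤ×ℤ)) (u v : ℤ×ℤ) :
    mapp M (u + v) = mapp M u + mapp M v := by
  rw [Prod.ext_iff]; constructor <;> simp [mapp] <;> ring

theorem local_struct (f : ℤ×ℤ → ℤ×ℤ) (hS : ∀ u ∈ Sl, f u ∈ Sl)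
    (hinj : ∀ u ∈ Sl, ∀ v ∈ Sl, f u = f v → u = v)
    (hadj : ∀ u ∈ Sl, ∀ v ∈ Sl, u - v ∈ Sl → f u - f v ∈ Sl) :
    ∃ k : Fin 12, ∀ u ∈ Sl, f u = mapp (T k) u := by
  obtain ⟨g0, hg0⟩ := svidx (f (sv 0)) (hS _ (svSl 0))
  obtain ⟨g1, hg1⟩ := svidx (f (sv 1)) (hS _ (svSl 1))
  have h01 : sv g0 - sv g1 ∈ Sl := by
    rw [hg0, hg1]; exact hadj _ (svSl 0) _ (svSl 1) sv01
  obtain ⟨k, hk0, hk1⟩ := L1 g0 g1 h01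
  have step : ∀ i : Fin 6, f (sv i) = mapp (T k) (sv i) →
      f (sv (i+1)) = mapp (T k) (sv (i+1)) →
      f (sv (i+2)) = mapp (T k) (sv (i+2)) := by
    intro i h0 h1
    refine L2 (f (sv i)) (hS _ (svSl i)) (f (sv (i+1))) (hS _ (svSl (i+1)))
      (hadj _ (svSl i) _ (svSl (i+1)) (svstep i))
      (f (sv (i+2))) (hS _ (svSl (i+2))) (mapp (T k) (sv (i+2))) (LTmem k (i+2))
      (hadj _ (svSl (i+2)) _ (svSl (i+1)) (svstep2 i))
      ?_ ?_ ?_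
    · rw [h1]; exact LTadj k (i+2) (i+1) (svstep2 i)
    · intro h; exact svne i (hinj _ (svSl (i+2)) _ (svSl i) h)
    · rw [h0]; exact LTne k (i+2) i (svne i)
  have a0 : f (sv 0) = mapp (T k) (sv 0) := by rw [hk0, hg0]
  have a1 : f (sv 1) = mapp (T k) (sv 1) := by rw [hk1, hg1]
  have e2 : (0:Fin 6)+2 = 2 := by decide
  have e3 : (1:Fin 6)+2 = 3 := by decide
  have e4 : (2:Fin 6)+2 = 4 := by decide
  have e5 : (3:Fin 6)+2 = 5 := by decide
  have a2 := step 0 a0 a1; rw [e2] at a2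
  have a3 := step 1 a1 a2; rw [e3] at a3
  have a4 := step 2 a2 a3; rw [e4] at a4
  have a5 := step 3 a3 a4; rw [e5] at a5
  refine ⟨k, ?_⟩
  intro u hu
  obtain ⟨i, rfl⟩ := svidx u hu
  fin_cases i
  exacts [a0, a1, a2, a3, a4, a5]

theorem main_comb (ψ : ℤ×ℤ → ℤ×ℤ) (hinj : Function.Injective ψ)
    (hadj : ∀ p q : ℤ×ℤ, ψ p - ψ q ∈ Sl ↔ p - q ∈ Sl) :
    ∃ k : Fin 12, ∀ p, ψ p = mapp (T k) p + ψ 0 := by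
  have loc : ∀ p : ℤ×ℤ, ∃ k : Fin 12, ∀ u ∈ Sl, ψ (p+u) = ψ p + mapp (T k) u := by
    intro p
    obtain ⟨k, hk⟩ := local_struct (fun u => ψ (p+u) - ψ p)
      (fun u hu => (hadj _ _).mpr (by rw [show p + u - p = u from by ring]; exact hu))
      (fun u _ v _ h => by
        have h2 : ψ (p+u) = ψ (p+v) := by
          have := sub_left_inj.mp h
          exact this
        exact add_left_cancel (hinj h2))
      (fun u _ v _ h => by
        rw [show ψ (p+u) - ψ p - (ψ (p+v) - ψ p) = ψ (p+u) - ψ (p+v) from by ring]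
        exact (hadj _ _).mpr (by rw [show p+u-(p+v) = u - v from by ring]; exact h))
    refine ⟨k, fun u hu => ?_⟩
    have h := hk u hu
    linear_combination h
  obtain ⟨k0, h0⟩ := loc 0
  set M := T k0 with hM
  have step : ∀ p : ℤ×ℤ, (∀ u ∈ Sl, ψ (p+u) = ψ p + mapp M u) →
      ∀ i : Fin 6, ∀ u ∈ Sl, ψ (p + sv i + u) = ψ (p + sv i) + mapp M u := by
    intro p hp i
    obtain ⟨k', hk'⟩ := loc (p + sv i)
    have key1 : mapp (T k') (sv (i+2)) = mapp M (sv (i+2)) := by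
      have e1 : p + sv i + sv (i+2) = p + sv (i+1) := by
        rw [← svdiff i]; ring
      have h1 := hk' (sv (i+2)) (svSl _)
      rw [e1, hp _ (svSl (i+1)), hp _ (svSl i)] at h1
      have h2 : mapp (T k') (sv (i+2)) = mapp M (sv (i+1)) - mapp M (sv i) := by
        linear_combination -h1
      rw [h2, ← mapp_sub, svdiff]
    have key2 : mapp (T k') (sv (i+3)) = mapp M (sv (i+3)) := by
      have e2 : p + sv i + sv (i+3) = p := by rw [svneg]; ring
      have h1 := hk' (sv (i+3)) (svSl _)
      rw [e2, hp _ (svSl i)] at h1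
      have h2 : mapp (T k') (sv (i+3)) = mapp M (-(sv i)) := by
        rw [mapp_neg]; linear_combination -h1
      rw [h2, ← svneg]
    have eidx : i + 2 + 1 = i + 3 := by rw [add_assoc]; rfl
    have Teq : T k' = M := by
      refine Lmat k' k0 (i+2) key1 ?_
      rw [eidx]; exact key2
    intro u hu
    rw [hk' u hu, Teq]
  have sv0 : sv 0 = ((1:ℤ),(0:ℤ)) := rfl
  have sv1 : sv 1 = ((0:ℤ),(1:ℤ)) := rfl
  have sv3 : sv 3 = ((-1:ℤ),(0:ℤ)) := rfl
  have sv4 : sv 4 = ((0:ℤ),(-1:ℤ)) := rfl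
  have row : ∀ a : ℤ, ∀ u ∈ Sl, ψ ((a,0)+u) = ψ (a,0) + mapp M u := by
    intro a
    induction a using Int.induction_on with
    | zero => exact fun u hu => h0 u hu
    | succ a ih =>
        have h := step (a,0) ih 0
        rw [show ((a:ℤ),(0:ℤ)) + sv 0 = ((a+1:ℤ),(0:ℤ)) from by
          rw [sv0, Prod.mk_add_mk, add_zero]] at h
        exact h
    | pred a ih =>
        have h := step (-a,0) ih 3
        rw [show ((-a:ℤ),(0:ℤ)) + sv 3 = ((-a-1:ℤ),(0:ℤ)) from by
          rw [sv3, Prod.mk_add_mk, add_zero]; norm_num; ring] at h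
        exact h
  have Hall : ∀ p : ℤ×ℤ, ∀ u ∈ Sl, ψ (p+u) = ψ p + mapp M u := by
    rintro ⟨a, b⟩
    induction b using Int.induction_on with
    | zero => exact row a
    | succ b ih =>
        have h := step (a,b) ih 1
        rw [show ((a:ℤ),(b:ℤ)) + sv 1 = ((a:ℤ),(b+1:ℤ)) from by
          rw [sv1, Prod.mk_add_mk, add_zero]] at h
        exact h
    | pred b ih =>
        have h := step (a,-b) ih 4
        rw [show ((a:ℤ),(-b:ℤ)) + sv 4 = ((a:ℤ),(-b-1:ℤ)) from by
          rw [sv4, Prod.mk_add_mk, add_zero]; norm_num; ring] at h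
        exact h
  refine ⟨k0, ?_⟩
  have rowG : ∀ a : ℤ, ψ (a, 0) = mapp M (a,0) + ψ 0 := by
    intro a
    induction a using Int.induction_on with
    | zero =>
        have : mapp M ((0:ℤ),(0:ℤ)) = 0 := by
          rw [Prod.ext_iff]; constructor <;> simp [mapp]
        rw [this, zero_add]; rfl
    | succ a ih =>
        have h := Hall (a,0) (sv 0) (svSl 0)
        rw [show ((a:ℤ),(0:ℤ)) + sv 0 = ((a+1:ℤ),(0:ℤ)) from by
          rw [sv0, Prod.mk_add_mk, add_zero]] at h
        have hm : mapp M ((a+1:ℤ),(0:ℤ)) = mapp M (a,0) + mapp M (sv 0) := by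
          rw [sv0, ← mapp_add, Prod.mk_add_mk, add_zero]
        rw [h, ih, hm]; abel
    | pred a ih =>
        have h := Hall (-a-1,0) (sv 0) (svSl 0)
        rw [show ((-a-1:ℤ),(0:ℤ)) + sv 0 = ((-a:ℤ),(0:ℤ)) from by
          rw [sv0, Prod.mk_add_mk, add_zero]; norm_num] at h
        have hm : mapp M ((-a:ℤ),(0:ℤ)) = mapp M (-a-1,0) + mapp M (sv 0) := by
          rw [sv0, ← mapp_add, Prod.mk_add_mk, add_zero]; norm_num
        linear_combination ih - h + hm
  rintro ⟨a, b⟩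
  induction b using Int.induction_on with
  | zero => exact rowG a
  | succ b ih =>
      have h := Hall (a,b) (sv 1) (svSl 1)
      rw [show ((a:ℤ),(b:ℤ)) + sv 1 = ((a:ℤ),(b+1:ℤ)) from by
        rw [sv1, Prod.mk_add_mk, add_zero]] at h
      have hm : mapp M ((a:ℤ),(b+1:ℤ)) = mapp M (a,b) + mapp M (sv 1) := by
        rw [sv1, ← mapp_add, Prod.mk_add_mk, add_zero]
      rw [h, ih, hm]; abel
  | pred b ih =>
      have h := Hall (a,-b-1) (sv 1) (svSl 1)
      rw [show ((a:ℤ),(-b-1:ℤ)) + sv 1 = ((a:ℤ),(-b:ℤ)) from by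
        rw [sv1, Prod.mk_add_mk, add_zero]; norm_num] at h
      have hm : mapp M ((a:ℤ),(-b:ℤ)) = mapp M (a,-b-1) + mapp M (sv 1) := by
        rw [sv1, ← mapp_add, Prod.mk_add_mk, add_zero]; norm_num
      linear_combination ih - h + hm

noncomputable def ι (p : ℤ×ℤ) : ℝ×ℝ :=
  ((p.1:ℝ) + (p.2:ℝ)/2, (p.2:ℝ) * (Real.sqrt 3 / 2))

theorem memι (p : ℤ×ℤ) : ι p ∈ triLat := by
  refine ⟨p.1, p.2, ?_⟩
  rw [Prod.ext_iff]
  constructor <;> simp [ι] <;> ring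

theorem ι_inj : Function.Injective ι := by
  intro p q h
  rw [Prod.ext_iff] at h
  obtain ⟨h1, h2⟩ := h
  simp only [ι] at h1 h2
  have s3 : Real.sqrt 3 / 2 ≠ 0 := by positivity
  have hb : (p.2:ℝ) = q.2 := mul_right_cancel₀ s3 h2
  have hb' : p.2 = q.2 := by exact_mod_cast hb
  have ha : p.1 = q.1 := by
    have : (p.1:ℝ) = q.1 := by rw [hb] at h1; linarith
    exact_mod_cast this
  exact Prod.ext_iff.mpr ⟨ha, hb'⟩

theorem ι_surj (x : ℝ×ℝ) (hx : x ∈ triLat) : ∃ p : ℤ×ℤ, ι p = x := by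
  obtain ⟨a, b, rfl⟩ := hx
  refine ⟨(a,b), ?_⟩
  rw [Prod.ext_iff]
  constructor <;> simp [ι] <;> ring

theorem Qchar (d : ℤ×ℤ) : d.1^2 + d.1*d.2 + d.2^2 = 1 ↔ d ∈ Sl := by
  obtain ⟨x, y⟩ := d
  simp only
  constructor
  · intro h
    have hx2 : x^2 ≤ 1 := by
      have h1 : 3*x^2 ≤ 4 := by nlinarith [sq_nonneg (x+2*y)]
      nlinarith
    have hy2 : y^2 ≤ 1 := by
      have h1 : 3*y^2 ≤ 4 := by nlinarith [sq_nonneg (2*x+y)]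
      nlinarith
    have hx1 : -1 ≤ x := by nlinarith [sq_nonneg (x+1)]
    have hx1' : x ≤ 1 := by nlinarith [sq_nonneg (x-1)]
    have hy1 : -1 ≤ y := by nlinarith [sq_nonneg (y+1)]
    have hy1' : y ≤ 1 := by nlinarith [sq_nonneg (y-1)]
    interval_cases x <;> interval_cases y <;> simp_all <;> decide
  · intro h
    fin_cases h <;> decide

theorem adj_iff (p q : ℤ×ℤ) : GT.Adj ⟨ι p, memι p⟩ ⟨ι q, memι q⟩ ↔ p - q ∈ Sl := by
  rw [← Qchar (p - q)]
  have h3 : Real.sqrt 3 * Real.sqrt 3 = 3 := Real.mul_self_sqrt (by norm_num)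
  have key : ((ι p).1 - (ι q).1)^2 + ((ι p).2 - (ι q).2)^2
      = (((p-q).1:ℝ)^2 + ((p-q).1:ℝ)*((p-q).2:ℝ) + ((p-q).2:ℝ)^2) := by
    simp only [ι, Prod.fst_sub, Prod.snd_sub]
    push_cast
    linear_combination (((p.2:ℝ) - q.2)^2/4) * h3
  show (((ι p) : ℝ×ℝ).1 - ((ι q) : ℝ×ℝ).1)^2 + (((ι p) : ℝ×ℝ).2 - ((ι q) : ℝ×ℝ).2)^2 = 1 ↔ _
  rw [key]
  constructor
  · intro h; exact_mod_cast h
  · intro h; exact_mod_cast h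

/-- Every graph automorphism of the triangular grid graph is affine: it is
given by `x ↦ A·x + b` for an orthogonal linear map `A` of `ℝ²` with `A(L) = L` and a
vector `b ∈ L`. (In particular it extends to an isometry of the Euclidean plane: a
translation, a rotation by a multiple of 60°, a reflection, or a glide reflection.) -/
theorem triangular_grid_automorphism_affine (φ : GT ≃g GT) :
    ∃ A : Matrix (Fin 2) (Fin 2) ℝ,
      A.transpose * A = 1 ∧
      (fun p : ℝ × ℝ => (A 0 0 * p.1 + A 0 1 * p.2, A 1 0 * p.1 + A 1 1 * p.2)) ''
          triLat = triLat ∧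
      ∃ b ∈ triLat, ∀ x : triLat,
        ((φ x : ℝ × ℝ)) =
          (A 0 0 * (x : ℝ × ℝ).1 + A 0 1 * (x : ℝ × ℝ).2 + b.1,
           A 1 0 * (x : ℝ × ℝ).1 + A 1 1 * (x : ℝ × ℝ).2 + b.2) := by
  classical
  have h3 : Real.sqrt 3 * Real.sqrt 3 = 3 := Real.mul_self_sqrt (by norm_num)
  have hψι : ∀ p : ℤ×ℤ, ∃ w : ℤ×ℤ, ι w = (φ ⟨ι p, memι p⟩ : ℝ×ℝ) :=
    fun p => ι_surj _ (φ ⟨ι p, memι p⟩).2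
  set ψ : ℤ×ℤ → ℤ×ℤ := fun p => Classical.choose (hψι p) with hψdef
  have hι : ∀ p, ι (ψ p) = (φ ⟨ι p, memι p⟩ : ℝ×ℝ) := fun p => Classical.choose_spec (hψι p)
  have hψinj : Function.Injective ψ := by
    intro p q h
    have h1 : (φ ⟨ι p, memι p⟩ : ℝ×ℝ) = (φ ⟨ι q, memι q⟩ : ℝ×ℝ) := by
      rw [← hι, ← hι, h]
    have h2 : (⟨ι p, memι p⟩ : triLat) = ⟨ι q, memι q⟩ := φ.injective (Subtype.ext h1)
    exact ι_inj (congrArg Subtype.val h2)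
  have hψadj : ∀ p q : ℤ×ℤ, ψ p - ψ q ∈ Sl ↔ p - q ∈ Sl := by
    intro p q
    rw [← adj_iff (ψ p) (ψ q), ← adj_iff p q]
    have e1 : (⟨ι (ψ p), memι _⟩ : triLat) = φ ⟨ι p, memι p⟩ := Subtype.ext (hι p)
    have e2 : (⟨ι (ψ q), memι _⟩ : triLat) = φ ⟨ι q, memι q⟩ := Subtype.ext (hι q)
    rw [e1, e2]
    exact φ.map_adj_iff
  obtain ⟨k, hk⟩ := main_comb ψ hψinj hψadj
  obtain ⟨hq1, hq2, hq3⟩ := Lq k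
  set m00 : ℝ := ((T k).1.1 : ℝ) with hm00
  set m01 : ℝ := ((T k).1.2 : ℝ) with hm01
  set m10 : ℝ := ((T k).2.1 : ℝ) with hm10
  set m11 : ℝ := ((T k).2.2 : ℝ) with hm11
  have hq1' : m00^2 + m00*m10 + m10^2 = 1 := by rw [hm00, hm10]; exact_mod_cast hq1
  have hq2' : m01^2 + m01*m11 + m11^2 = 1 := by rw [hm01, hm11]; exact_mod_cast hq2
  have hq3' : 2*m00*m01 + m00*m11 + m10*m01 + 2*m10*m11 = 1 := by
    rw [hm00, hm01, hm10, hm11]; exact_mod_cast hq3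
  set A : Matrix (Fin 2) (Fin 2) ℝ :=
    !![m00 + m10/2, (2*m01 + m11 - m00 - m10/2) * Real.sqrt 3 / 3;
       m10 * Real.sqrt 3 / 2, m11 - m10/2] with hA
  have hA00 : A 0 0 = m00 + m10/2 := by simp [hA]
  have hA01 : A 0 1 = (2*m01 + m11 - m00 - m10/2) * Real.sqrt 3 / 3 := by simp [hA]
  have hA10 : A 1 0 = m10 * Real.sqrt 3 / 2 := by simp [hA]
  have hA11 : A 1 1 = m11 - m10/2 := by simp [hA]
  have key : ∀ u : ℤ×ℤ,
      (A 0 0 * (ι u).1 + A 0 1 * (ι u).2, A 1 0 * (ι u).1 + A 1 1 * (ι u).2)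
        = ι (mapp (T k) u) := by
    intro u
    rw [Prod.ext_iff]
    constructor
    · simp only [hA00, hA01, ι, mapp]
      push_cast
      rw [← hm00, ← hm01, ← hm10, ← hm11]
      linear_combination ((2*m01 + m11 - m00 - m10/2) * (u.2:ℝ)/6) * h3
    · simp only [hA10, hA11, ι, mapp]
      push_cast
      rw [← hm10, ← hm11]
      ring
  refine ⟨A, ?_, ?_, ι (ψ 0), memι _, ?_⟩
  · ext i j
    fin_cases i <;> fin_cases j <;>
      simp [hA, Matrix.mul_apply, Fin.sum_univ_two, Matrix.vecHead, Matrix.transpose_apply]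
    · linear_combination hq1' + (m10^2/4) * h3
    · linear_combination (Real.sqrt 3/3) * hq3' - (Real.sqrt 3/3) * hq1'
    · linear_combination (Real.sqrt 3/3) * hq3' - (Real.sqrt 3/3) * hq1'
    · linear_combination ((2*m01 + m11 - m00 - m10/2)^2/9) * h3 + (1/3)*hq1' + (4/3)*hq2' - (2/3)*hq3'
  · apply Set.Subset.antisymm
    · rintro y ⟨x, hx, rfl⟩
      obtain ⟨p, rfl⟩ := ι_surj x hx
      simp only
      rw [key]
      exact memι _
    · intro y hy
      obtain ⟨v, rfl⟩ := ι_surj y hy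
      obtain ⟨k', hk1, hk2⟩ := Linv k
      refine ⟨ι (mapp (T k') v), memι _, ?_⟩
      simp only
      rw [key, ← mapp_mmul, hk1, mapp_id]
  · intro x
    obtain ⟨p, hp⟩ := ι_surj x x.2
    have hx : x = ⟨ι p, memι p⟩ := Subtype.ext hp.symm
    rw [hx, ← hι p, hk p]
    have hadd : ι (mapp (T k) p + ψ 0)
        = ((ι (mapp (T k) p)).1 + (ι (ψ 0)).1, (ι (mapp (T k) p)).2 + (ι (ψ 0)).2) := by
      rw [Prod.ext_iff]
      constructor <;> simp [ι] <;> push_cast <;> ring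
    rw [hadd, ← key p]
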